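/- The expression e = aba − ( a(ba − a) ∪ (a − ab)a ∪ a(b − c)a ∪ a(cc − c)a ∪ a(cb ∩ b)a ) over the vocabulary {a, b, c} is not finitely satisfiable: for every finite structure I over {a, b, c}, e(I) = ∅. -/
import Mathlib


/-- Syntax of the Downward Algebra (DA): expressions built from relation names
in a vocabulary `Γ` using union, intersection, difference, and composition. -/
inductive DA (Γ : Type) : Type where
  | var : Γ → DA Γ
  | union : DA Γ → DA Γ → DA Γ
  | inter : DA Γ → DA Γ → DA Γ
  | diff : DA Γ → DA Γ → DA Γ
  | comp : DA Γ → DA Γ → DA Γ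

namespace DA

/-- Semantics: the binary relation `e(I)` defined by expression `e` in a structure `I`
(a structure over `Γ` with domain `D` assigns a binary relation on `D` to each name). -/
def eval {Γ D : Type} (I : Γ → D → D → Prop) : DA Γ → D → D → Prop
  | .var a => I a
  | .union e f => fun x y => eval I e x y ∨ eval I f x y
  | .inter e f => fun x y => eval I e x y ∧ eval I f x y
  | .diff e f => fun x y => eval I e x y ∧ ¬ eval I f x y
  | .comp e f => fun x y => ∃ z, eval I e x z ∧ eval I f z y

/-- The difference degree of an expression. -/
def deg {Γ : Type} : DA Γ → ℕ
  | .var _ => 0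
  | .union e f => max (deg e) (deg f)
  | .inter e f => max (deg e) (deg f)
  | .diff e f => max (deg e) (deg f) + 1
  | .comp e f => max (deg e) (deg f)

/-- A structure is finite when each relation is a finite binary relation. -/
def FiniteStruct {Γ D : Type} (I : Γ → D → D → Prop) : Prop :=
  ∀ a, {p : D × D | I a p.1 p.2}.Finite

/-- An expression is finitely satisfiable if some finite structure makes it
evaluate to a nonempty relation. -/
def FinSat {Γ : Type} (e : DA Γ) : Prop :=
  ∃ (D : Type) (I : Γ → D → D → Prop), FiniteStruct I ∧ ∃ x y, eval I e x y

end DA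

/-- The vocabulary with three relation names a, b, c. -/
inductive ABC : Type where
  | a : ABC
  | b : ABC
  | c : ABC

/-- The expression aba − ( a(ba − a) ∪ (a − ab)a ∪ a(b − c)a ∪ a(cc − c)a ∪ a(cb ∩ b)a ). -/
def eInf : DA ABC :=
  .diff (.comp (.var .a) (.comp (.var .b) (.var .a)))
    (.union (.comp (.var .a) (.diff (.comp (.var .b) (.var .a)) (.var .a)))
     (.union (.comp (.diff (.var .a) (.comp (.var .a) (.var .b))) (.var .a))
      (.union (.comp (.var .a) (.comp (.diff (.var .b) (.var .c)) (.var .a)))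
       (.union (.comp (.var .a) (.comp (.diff (.comp (.var .c) (.var .c)) (.var .c)) (.var .a)))
               (.comp (.var .a) (.comp (.inter (.comp (.var .c) (.var .b)) (.var .b)) (.var .a)))))))

/-- The expression aba − ( a(ba − a) ∪ (a − ab)a ∪ a(b − c)a ∪ a(cc − c)a ∪ a(cb ∩ b)a )
is not finitely satisfiable: it evaluates to the empty relation in every finite structure. -/
theorem stmt16 (D : Type) (I : ABC → D → D → Prop) (hfin : DA.FiniteStruct I)
    (x y : D) : ¬ DA.eval I eInf x y := by
  intro h
  simp only [eInf, DA.eval] at h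
  obtain ⟨⟨z0, haz0, w0, hbz0w0, haw0y⟩, hneg⟩ := h
  push_neg at hneg
  obtain ⟨h1, h2, h3, h4, h5⟩ := hneg
  have haz0y : I ABC.a z0 y := h1 z0 haz0 ⟨w0, hbz0w0, haw0y⟩
  -- the set S of middle points, closed under b-predecessors
  have step : ∀ s : {z // I ABC.a x z ∧ I ABC.a z y},
      ∃ s' : {z // I ABC.a x z ∧ I ABC.a z y}, I ABC.b s'.1 s.1 := by
    rintro ⟨z, haz, hzy⟩
    by_contra hc
    push_neg at hc
    refine h2 z ⟨haz, fun u hu hb => ?_⟩ hzy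
    exact hc ⟨u, hu, h1 u hu ⟨z, hb, hzy⟩⟩ hb
  choose f hf using step
  set seq : ℕ → {z // I ABC.a x z ∧ I ABC.a z y} :=
    fun n => f^[n] ⟨z0, haz0, haz0y⟩ with hseq
  have hb : ∀ n, I ABC.b (seq (n+1)).1 (seq n).1 := by
    intro n
    have : seq (n+1) = f (seq n) := Function.iterate_succ_apply' f n _
    rw [this]; exact hf (seq n)
  have hc : ∀ n, I ABC.c (seq (n+1)).1 (seq n).1 := by
    intro n
    by_contra hnc
    exact h3 (seq (n+1)).1 (seq (n+1)).2.1 (seq n).1 ⟨hb n, hnc⟩ (seq n).2.2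
  have hchain : ∀ k n, I ABC.c (seq (n+k+1)).1 (seq n).1 := by
    intro k
    induction k with
    | zero => exact fun n => hc n
    | succ k ih =>
      intro n
      by_contra hnc
      exact h4 (seq (n+k+2)).1 (seq (n+k+2)).2.1 (seq n).1
        ⟨⟨(seq (n+k+1)).1, hc (n+k+1), ih n⟩, hnc⟩ (seq n).2.2
  have hwit : ∀ n, ∃ w, I ABC.b (seq n).1 w ∧ I ABC.a w y := by
    intro n
    cases n with
    | zero => exact ⟨w0, hbz0w0, haw0y⟩
    | succ n => exact ⟨(seq n).1, hb n, (seq n).2.2⟩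
  have hdist : ∀ p q, q < p → (seq p).1 ≠ (seq q).1 := by
    intro p q hlt heq
    obtain ⟨w, hbw, hwy⟩ := hwit q
    obtain ⟨k, hk⟩ := Nat.exists_eq_add_of_lt hlt
    have hcpq : I ABC.c (seq p).1 (seq q).1 := by
      have := hchain k q
      rwa [show q + k + 1 = p by omega] at this
    exact h5 (seq p).1 (seq p).2.1 w ⟨⟨(seq q).1, hcpq, hbw⟩, heq ▸ hbw⟩ hwy
  have hinj : Function.Injective (fun n => (seq n).1) := by
    intro m n hmn
    rcases lt_trichotomy m n with h | h | h
    · exact absurd hmn.symm (hdist n m h)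
    · exact h
    · exact absurd hmn (hdist m n h)
  have hAfin : {z | I ABC.a x z}.Finite :=
    ((hfin ABC.a).image Prod.snd).subset (fun z hz => ⟨(x, z), hz, rfl⟩)
  exact (Set.infinite_of_injective_forall_mem hinj
    (fun n => (seq n).2.1)) hAfin
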